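/- Let v_1,…,v_q ∈ ℝⁿ with Σ_{i=1}^q v_i = 0, and suppose the matrix V ∈ ℝ^{n×q} with columns v_i has full row rank (equivalently, Vᵀ : ℝⁿ → ℝ^q is injective). Then the function y ↦ lse(Vᵀy) = ln(Σ_{i=1}^q exp(⟨v_i, y⟩)) is strictly convex on ℝⁿ. -/

import Mathlib

open Real

/-- Let `v_1, …, v_q ∈ ℝⁿ` with `Σ_i v_i = 0`, and suppose the matrix
`V` with columns `v_i` has full row rank, i.e. `Vᵀ : ℝⁿ → ℝ^q`, `y ↦ (⟨v_i, y⟩)_i`,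
is injective.  Then `y ↦ lse (Vᵀ y) = ln (Σ_i exp ⟨v_i, y⟩)` is strictly convex
on `ℝⁿ`. -/
theorem lse_comp_Vt_strictConvex {n q : ℕ} (v : Fin q → Fin n → ℝ)
    (hsum : ∑ i, v i = 0)
    (hinj : Function.Injective
      (fun y : Fin n → ℝ => fun i : Fin q => ∑ j, v i j * y j)) :
    StrictConvexOn ℝ Set.univ
      (fun y : Fin n → ℝ => Real.log (∑ i, Real.exp (∑ j, v i j * y j))) := by
  set L : Fin q → (Fin n → ℝ) → ℝ := fun i y => ∑ j, v i j * y j with hLdef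
  rcases Nat.eq_zero_or_pos q with hq | hq
  · refine ⟨convex_univ, fun x _ y _ hxy a b ha hb hab => absurd (hinj ?_) hxy⟩
    funext i; exact absurd i.2 (by omega)
  haveI : Nonempty (Fin q) := Fin.pos_iff_nonempty.mp hq
  refine ⟨convex_univ, fun x _ y _ hxy a b ha hb hab => ?_⟩
  have hSx : (0:ℝ) < ∑ i, exp (L i x) :=
    Finset.sum_pos (fun i _ => exp_pos _) Finset.univ_nonempty
  have hSy : (0:ℝ) < ∑ i, exp (L i y) :=
    Finset.sum_pos (fun i _ => exp_pos _) Finset.univ_nonempty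
  set Sx := ∑ i, exp (L i x) with hSxdef
  set Sy := ∑ i, exp (L i y) with hSydef
  set α : Fin q → ℝ := fun i => L i x - log Sx with hα
  set β : Fin q → ℝ := fun i => L i y - log Sy with hβ
  have hsumα : ∑ i, exp (α i) = 1 := by
    simp only [hα, Real.exp_sub, Real.exp_log hSx]
    rw [← Finset.sum_div, ← hSxdef, div_self hSx.ne']
  have hsumβ : ∑ i, exp (β i) = 1 := by
    simp only [hβ, Real.exp_sub, Real.exp_log hSy]
    rw [← Finset.sum_div, ← hSydef, div_self hSy.ne']
  -- there is an index where α and β differ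
  have hex : ∃ i, α i ≠ β i := by
    by_contra hc
    push_neg at hc
    have hc' : ∀ i, L i x - L i y = log Sx - log Sy := by
      intro i; have := hc i; simp only [hα, hβ] at this; linarith
    have hsum0 : ∑ i, (L i x - L i y) = 0 := by
      have hpt : ∀ i, L i x - L i y = ∑ j, v i j * (x j - y j) := by
        intro i
        simp only [hLdef]
        rw [← Finset.sum_sub_distrib]; congr 1; funext j; ring
      simp only [hpt]
      rw [Finset.sum_comm]
      have hcol : ∀ j, ∑ i, v i j = 0 := by
        intro j
        have := congrFun hsum j
        simpa [Finset.sum_apply] using this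
      have : ∀ j : Fin n, ∑ i, v i j * (x j - y j) = 0 := by
        intro j; rw [← Finset.sum_mul, hcol j, zero_mul]
      simp [this]
    have hq0 : (q : ℝ) * (log Sx - log Sy) = 0 := by
      rw [← hsum0]; simp [hc', Finset.sum_const, nsmul_eq_mul]; ring
    have hcz : log Sx - log Sy = 0 := by
      have hqne : (q : ℝ) ≠ 0 := Nat.cast_ne_zero.mpr hq.ne'
      exact (mul_eq_zero.mp hq0).resolve_left hqne
    have : x = y := by
      apply hinj
      funext i
      have := hc' i
      simp only [hLdef] at this ⊢
      linarith [hcz]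
    exact hxy this
  obtain ⟨i0, hi0⟩ := hex
  -- pointwise convexity of exp, strict at i0
  have key : ∀ i ∈ Finset.univ, exp (a * α i + b * β i) ≤ a * exp (α i) + b * exp (β i) := by
    intro i _
    have := convexOn_exp.2 (Set.mem_univ (α i)) (Set.mem_univ (β i)) ha.le hb.le hab
    simpa [smul_eq_mul] using this
  have keystrict : exp (a * α i0 + b * β i0) < a * exp (α i0) + b * exp (β i0) := by
    have := strictConvexOn_exp.2 (Set.mem_univ (α i0)) (Set.mem_univ (β i0)) hi0 ha hb hab
    simpa [smul_eq_mul] using this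
  have hlt : ∑ i, exp (a * α i + b * β i) < 1 := by
    have h1 : ∑ i, exp (a * α i + b * β i) < ∑ i, (a * exp (α i) + b * exp (β i)) :=
      Finset.sum_lt_sum key ⟨i0, Finset.mem_univ _, keystrict⟩
    calc ∑ i, exp (a * α i + b * β i) < ∑ i, (a * exp (α i) + b * exp (β i)) := h1
      _ = a * (∑ i, exp (α i)) + b * (∑ i, exp (β i)) := by
          rw [Finset.sum_add_distrib, Finset.mul_sum, Finset.mul_sum]
      _ = 1 := by rw [hsumα, hsumβ]; linarith
  -- relate to the goal
  set c := a * log Sx + b * log Sy with hc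
  have hlinz : ∀ i, (∑ j, v i j * (a • x + b • y) j) = a * L i x + b * L i y := by
    intro i
    simp only [hLdef, Pi.add_apply, Pi.smul_apply, smul_eq_mul, Finset.mul_sum,
      ← Finset.sum_add_distrib]
    congr 1; funext j; ring
  have hzlt : ∑ i, exp (∑ j, v i j * (a • x + b • y) j) < exp c := by
    have : ∀ i, exp (∑ j, v i j * (a • x + b • y) j) = exp (a * α i + b * β i) * exp c := by
      intro i
      rw [← Real.exp_add, hlinz i]
      congr 1
      simp only [hα, hβ, hc]; ring
    simp only [this]
    rw [← Finset.sum_mul]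
    calc (∑ i, exp (a * α i + b * β i)) * exp c < 1 * exp c :=
          mul_lt_mul_of_pos_right hlt (exp_pos c)
      _ = exp c := one_mul _
  have hzpos : (0:ℝ) < ∑ i, exp (∑ j, v i j * (a • x + b • y) j) :=
    Finset.sum_pos (fun i _ => exp_pos _) Finset.univ_nonempty
  have hfin := Real.log_lt_log hzpos hzlt
  rw [Real.log_exp] at hfin
  show Real.log (∑ i, exp (∑ j, v i j * (a • x + b • y) j))
      < a • Real.log Sx + b • Real.log Sy
  simpa [hc, smul_eq_mul] using hfin
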